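/- Let Λ be an m×m antisymmetric integer matrix and B an n×m integer matrix (m ≥ n) that are unitally compatible: BΛ = [−I_n, 0]. Let φ_k (1 ≤ k ≤ n) be the m×m reflection matrix of the mutation at k. Then the mutated pair (Λ', B') = (φ_k^T Λ φ_k, φ_k^p B φ_k^T) is again unitally compatible: B'Λ' = [−I_n, 0]. Moreover φ_k is an involution: φ_k² = I. -/

import Mathlib

namespace CompatPair

open Matrix

variable {m n : ℕ}

/-- The `n × m` matrix `[−I_n, 0]`. -/
def negIZero (m n : ℕ) : Matrix (Fin n) (Fin m) ℤ :=
  Matrix.of fun i j => if (j : ℕ) = (i : ℕ) then -1 else 0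

/-- The reflection matrix `φ_k` of the mutation at `k` (acting on row vectors, so that
`e_i ↦ e_i + [b_{ik}]_+ e_k` for `i ≠ k` and `e_k φ_k`-column carries the `−1`):
the identity matrix except in the `k`-th column, where `(φ_k)_{ik} = [−b_{ki}]_+`
for `i ≠ k` and `(φ_k)_{kk} = −1`. -/
def phiMat (hmn : n ≤ m) (B : Matrix (Fin n) (Fin m) ℤ) (k : Fin n) :
    Matrix (Fin m) (Fin m) ℤ :=
  Matrix.of fun i j =>
    if j = Fin.castLE hmn k then
      (if i = Fin.castLE hmn k then -1 else max (-(B k i)) 0)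
    else if i = j then 1 else 0

/-- The principal part (`n × n` upper-left corner) of an `m × m` matrix. -/
def princ (hmn : n ≤ m) (P : Matrix (Fin m) (Fin m) ℤ) : Matrix (Fin n) (Fin n) ℤ :=
  Matrix.of fun i j => P (Fin.castLE hmn i) (Fin.castLE hmn j)

theorem phi_inv (hmn : n ≤ m) (B : Matrix (Fin n) (Fin m) ℤ) (k : Fin n) :
    phiMat hmn B k * phiMat hmn B k = 1 := by
  set K := Fin.castLE hmn k with hK
  ext i j
  rw [mul_apply, one_apply]
  by_cases hj : j = K
  · subst hj
    by_cases hi : i = K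
    · subst hi
      rw [Finset.sum_eq_single K]
      · simp [phiMat, ← hK]
      · intro l _ hl
        simp [phiMat, ← hK, hl, Ne.symm hl]
      · simp
    · have : ∀ l, phiMat hmn B k i l * phiMat hmn B k l K =
          (if l = K then -(max (-(B k i)) 0) else 0) +
          (if l = i then max (-(B k i)) 0 else 0) := by
        intro l
        simp only [phiMat, of_apply, hK]
        by_cases h1 : l = K
        · subst h1; simp_all [Ne.symm hi]; intro h; exact absurd h.symm hi
        · by_cases h2 : l = i
          · subst h2; simp_all
          · simp_all [Ne.symm h2]
      rw [Finset.sum_congr rfl fun l _ => this l, Finset.sum_add_distrib]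
      simp [Finset.sum_ite_eq', hi, Ne.symm hi]
  · have : ∀ l, phiMat hmn B k i l * phiMat hmn B k l j =
        if l = j then phiMat hmn B k i j else 0 := by
      intro l
      simp only [phiMat, of_apply, hK]
      by_cases h2 : l = j <;> simp_all
    rw [Finset.sum_congr rfl fun l _ => this l]
    simp only [Finset.sum_ite_eq', Finset.mem_univ, if_true]
    simp [phiMat, ← hK, hj]

theorem stmt11 (hmn : n ≤ m) (Λ : Matrix (Fin m) (Fin m) ℤ)
    (B : Matrix (Fin n) (Fin m) ℤ) (k : Fin n)
    (hΛ : Λᵀ = -Λ)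
    (hskew : ∀ i j : Fin n, B i (Fin.castLE hmn j) = -B j (Fin.castLE hmn i))
    (hcompat : B * Λ = negIZero m n) :
    (princ hmn (phiMat hmn B k) * B * (phiMat hmn B k)ᵀ) *
        ((phiMat hmn B k)ᵀ * Λ * phiMat hmn B k) = negIZero m n ∧
    phiMat hmn B k * phiMat hmn B k = 1 := by
  have hinv := phi_inv hmn B k
  refine ⟨?_, hinv⟩
  set P := phiMat hmn B k with hPdef
  have hPT : Pᵀ * Pᵀ = (1 : Matrix (Fin m) (Fin m) ℤ) := by
    rw [← transpose_mul, hinv, transpose_one]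
  -- kill t-entries of P with t ≥ n
  have hvanish : ∀ (i : Fin n) (t : Fin m), ¬ (t : ℕ) < n → P (Fin.castLE hmn i) t = 0 := by
    intro i t ht
    have h1 : t ≠ Fin.castLE hmn k := by
      intro h; apply ht; rw [h]; exact k.2
    have h2 : Fin.castLE hmn i ≠ t := by
      intro h; apply ht; rw [← h]; exact i.2
    simp [hPdef, phiMat, h1, h2]
  have key : princ hmn P * (negIZero m n * P) = negIZero m n := by
    have h2 : negIZero m n * P = Matrix.of fun (l : Fin n) (j : Fin m) =>
        -(P (Fin.castLE hmn l) j) := by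
      ext l j
      rw [mul_apply]
      rw [Finset.sum_eq_single (Fin.castLE hmn l)]
      · simp [negIZero]
      · intro t _ ht
        have : (t : ℕ) ≠ (l : ℕ) := by
          intro h; exact ht (Fin.ext h)
        simp [negIZero, this]
      · simp
    rw [h2]
    ext i j
    rw [mul_apply]
    have hs : ∑ l : Fin n, princ hmn P i l *
          (Matrix.of fun (l : Fin n) (j : Fin m) => -(P (Fin.castLE hmn l) j)) l j
        = -∑ l : Fin n, P (Fin.castLE hmn i) (Fin.castLE hmn l) * P (Fin.castLE hmn l) j := by
      rw [← Finset.sum_neg_distrib]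
      apply Finset.sum_congr rfl
      intro l _
      simp [princ]
    rw [hs]
    have hlift : ∑ l : Fin n, P (Fin.castLE hmn i) (Fin.castLE hmn l) * P (Fin.castLE hmn l) j
        = ∑ t : Fin m, P (Fin.castLE hmn i) t * P t j := by
      have himg : ∑ t ∈ Finset.univ.image (Fin.castLE hmn),
            P (Fin.castLE hmn i) t * P t j
          = ∑ l : Fin n, P (Fin.castLE hmn i) (Fin.castLE hmn l) * P (Fin.castLE hmn l) j :=
        Finset.sum_image (fun a _ b _ h => Fin.castLE_injective hmn h)
      rw [← himg]
      apply Finset.sum_subset (Finset.subset_univ _)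
      intro t _ htn
      have ht : ¬ (t : ℕ) < n := by
        intro hlt
        exact htn (Finset.mem_image.2 ⟨⟨t, hlt⟩, Finset.mem_univ _, rfl⟩)
      rw [hvanish i t ht, zero_mul]
    rw [hlift]
    have := congrFun (congrFun hinv (Fin.castLE hmn i)) j
    rw [mul_apply] at this
    rw [this, one_apply]
    simp only [negIZero, of_apply]
    by_cases h : Fin.castLE hmn i = j
    · subst h; simp
    · have h' : ¬ ((j : ℕ) = (i : ℕ)) := fun hh => h (Fin.ext (by simp [hh]))
      simp [h, h']
  calc princ hmn P * B * Pᵀ * (Pᵀ * Λ * P)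
      = princ hmn P * (B * (Pᵀ * Pᵀ * (Λ * P))) := by
        simp only [Matrix.mul_assoc]
    _ = princ hmn P * (B * (Λ * P)) := by rw [hPT, one_mul]
    _ = negIZero m n := by rw [← Matrix.mul_assoc B Λ P, hcompat]; exact key

end CompatPair
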